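/- Let U : S(ℝⁿ) → S(ℝⁿ) be a bijection satisfying, for all f, g ∈ S(ℝⁿ): (1) U(f + ḡ) = U(f) + conj(U(g)), (2) U(f·g) = U(f)·U(g), (3) U(f ∗ g) = U(f) ∗ U(g). Then there exists an invertible real-linear map A : ℝⁿ → ℝⁿ such that A(supp f) = supp Uf for every f ∈ S(ℝⁿ). -/

import Mathlib

open MeasureTheory SchwartzMap Complex Metric Set Function Filter Topology Pointwise
open scoped ContDiff Convolution

noncomputable section Stmt9Aux

variable {n : ℕ}

abbrev EE (n : ℕ) := EuclideanSpace ℝ (Fin n)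
abbrev SS (n : ℕ) := SchwartzMap (EE n) ℂ

/-- Constructor: smooth compactly supported functions are Schwartz. -/
def ofCS (f : EE n → ℂ) (hsm : ContDiff ℝ ∞ f) (hcs : HasCompactSupport f) : SS n where
  toFun := f
  smooth' := hsm
  decay' := by
    intro k m
    set g : EE n → ℝ := fun x => ‖x‖ ^ k * ‖iteratedFDeriv ℝ m f x‖ with hg
    have hgc : Continuous g := by
      have h1 : Continuous fun x : EE n => iteratedFDeriv ℝ m f x :=
        hsm.continuous_iteratedFDeriv (by exact_mod_cast le_top)
      fun_prop
    have hgs : HasCompactSupport g :=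
      ((hcs.iteratedFDeriv m).norm).mul_left
    obtain ⟨C, hC⟩ := hgs.exists_bound_of_continuous hgc
    exact ⟨C, fun x => le_trans (le_abs_self _) (hC x)⟩

@[simp] lemma ofCS_apply (f : EE n → ℂ) (h1 h2) (x : EE n) : ofCS f h1 h2 x = f x := rfl

/-- Complex conjugation on Schwartz space. -/
def conjS (f : SS n) : SS n where
  toFun := fun x => starRingEnd ℂ (f x)
  smooth' := Complex.conjCLE.contDiff.comp (f.smooth _)
  decay' := by
    intro k m
    obtain ⟨C, hC⟩ := f.decay' k m
    refine ⟨C, fun x => ?_⟩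
    have : (fun x : EE n => starRingEnd ℂ (f x)) = ⇑Complex.conjLIE ∘ ⇑f := rfl
    rw [this, Complex.conjLIE.norm_iteratedFDeriv_comp_left]
    exact hC x

@[simp] lemma conjS_apply (f : SS n) (x : EE n) : conjS f x = starRingEnd ℂ (f x) := rfl

lemma SchwartzMap.hasTemperateGrowth' (g : SS n) : Function.HasTemperateGrowth ⇑g := by
  refine ⟨g.smooth _, fun m => ⟨0, SchwartzMap.seminorm ℝ 0 m g, fun x => ?_⟩⟩
  simpa using g.norm_iteratedFDeriv_le_seminorm ℝ m x

/-- Pointwise multiplication on Schwartz space. -/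
def mulS (f g : SS n) : SS n :=
  bilinLeftCLM (ContinuousLinearMap.mul ℝ ℂ) g.hasTemperateGrowth' f

@[simp] lemma mulS_apply (f g : SS n) (x : EE n) : mulS f g x = f x * g x := rfl

lemma mulS_eq_zero_iff (f g : SS n) : mulS f g = 0 ↔ ∀ x, f x * g x = 0 := by
  constructor
  · intro h x
    have := congrArg (fun u : SS n => u x) h
    simpa using this
  · intro h
    exact SchwartzMap.ext fun x => by simpa using h x

/-- bump data -/
def bdata (c : EE n) (r R : ℝ) (hr : 0 < r) (hrR : r < R) : ContDiffBump c :=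
  ⟨r, R, hr, hrR⟩

lemma bmp_smooth (c : EE n) (r R : ℝ) (hr : 0 < r) (hrR : r < R) :
    ContDiff ℝ ∞ (fun x => ((bdata c r R hr hrR) x : ℂ)) :=
  Complex.ofRealCLM.contDiff.comp (bdata c r R hr hrR).contDiff

lemma bmp_cs (c : EE n) (r R : ℝ) (hr : 0 < r) (hrR : r < R) :
    HasCompactSupport (fun x => ((bdata c r R hr hrR) x : ℂ)) :=
  ((bdata c r R hr hrR).hasCompactSupport).comp_left (g := fun t : ℝ => (t : ℂ)) (by simp)

/-- The bump function as a complex-valued Schwartz map. -/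
def bmp (c : EE n) (r R : ℝ) (hr : 0 < r) (hrR : r < R) : SS n :=
  ofCS _ (bmp_smooth c r R hr hrR) (bmp_cs c r R hr hrR)

lemma bmp_apply (c : EE n) (r R : ℝ) (hr : 0 < r) (hrR : r < R) (x : EE n) :
    bmp c r R hr hrR x = ((bdata c r R hr hrR) x : ℂ) := by simp [bmp]

lemma bmp_support (c : EE n) (r R : ℝ) (hr : 0 < r) (hrR : r < R) :
    support ⇑(bmp c r R hr hrR) = ball c R := by
  have h : support ⇑(bmp c r R hr hrR) = support ⇑(bdata c r R hr hrR) := by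
    ext x; simp [bmp_apply, mem_support]
  exact h.trans (bdata c r R hr hrR).support_eq

lemma bmp_tsupport (c : EE n) (r R : ℝ) (hr : 0 < r) (hrR : r < R) :
    tsupport ⇑(bmp c r R hr hrR) = closedBall c R := by
  rw [tsupport, bmp_support, closure_ball c (lt_trans hr hrR).ne']

lemma bmp_one (c : EE n) (r R : ℝ) (hr : 0 < r) (hrR : r < R) {x : EE n}
    (hx : x ∈ closedBall c r) : bmp c r R hr hrR x = 1 := by
  rw [bmp_apply, (bdata c r R hr hrR).one_of_mem_closedBall hx]
  norm_num

lemma bmp_cs' (c : EE n) (r R : ℝ) (hr : 0 < r) (hrR : r < R) :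
    HasCompactSupport ⇑(bmp c r R hr hrR) := by
  rw [HasCompactSupport, bmp_tsupport]
  exact isCompact_closedBall c R

/-- Convolution of two compactly supported Schwartz maps. -/
def convS (f g : SS n) (hf : HasCompactSupport ⇑f) (hg : HasCompactSupport ⇑g) : SS n :=
  ofCS (⇑f ⋆[ContinuousLinearMap.mul ℝ ℂ] ⇑g)
    (hg.contDiff_convolution_right (ContinuousLinearMap.mul ℝ ℂ) (f.continuous.locallyIntegrable) (g.smooth _))
    (hf.convolution (ContinuousLinearMap.mul ℝ ℂ) hg)

lemma convS_apply (f g : SS n) (hf : HasCompactSupport ⇑f) (hg : HasCompactSupport ⇑g)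
    (x : EE n) : convS f g hf hg x = ∫ y, f (x - y) * g y := by
  simp only [convS, ofCS_apply]
  exact convolution_eq_swap _


/-- bump with canonical inner radius -/
def bmpe (x : EE n) (ε : ℝ) (hε : 0 < ε) : SS n := bmp x (ε/2) ε (by linarith) (by linarith)

lemma bmpe_support (x : EE n) (ε : ℝ) (hε : 0 < ε) : support ⇑(bmpe x ε hε) = ball x ε :=
  bmp_support _ _ _ _ _

lemma bmpe_tsupport (x : EE n) (ε : ℝ) (hε : 0 < ε) : tsupport ⇑(bmpe x ε hε) = closedBall x ε :=
  bmp_tsupport _ _ _ _ _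

lemma bmpe_cs (x : EE n) (ε : ℝ) (hε : 0 < ε) : HasCompactSupport ⇑(bmpe x ε hε) :=
  bmp_cs' _ _ _ _ _

lemma conv_bmp_support (c₁ c₂ : EE n) {r₁ R₁ r₂ R₂ : ℝ} (h1 : 0 < r₁) (h2 : r₁ < R₁)
    (h3 : 0 < r₂) (h4 : r₂ < R₂) :
    support ⇑(convS (bmp c₁ r₁ R₁ h1 h2) (bmp c₂ r₂ R₂ h3 h4)
      (bmp_cs' c₁ r₁ R₁ h1 h2) (bmp_cs' c₂ r₂ R₂ h3 h4)) = ball (c₁ + c₂) (R₁ + R₂) := by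
  set φ₁ := bdata c₁ r₁ R₁ h1 h2
  set φ₂ := bdata c₂ r₂ R₂ h3 h4
  have hS : (0:ℝ) < R₁ + R₂ := by linarith
  ext t
  have hval : convS (bmp c₁ r₁ R₁ h1 h2) (bmp c₂ r₂ R₂ h3 h4)
      (bmp_cs' c₁ r₁ R₁ h1 h2) (bmp_cs' c₂ r₂ R₂ h3 h4) t
      = ((∫ y, φ₁ (t - y) * φ₂ y : ℝ) : ℂ) := by
    rw [convS_apply]
    rw [show (fun y => bmp c₁ r₁ R₁ h1 h2 (t - y) * bmp c₂ r₂ R₂ h3 h4 y)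
        = fun y => ((φ₁ (t - y) * φ₂ y : ℝ) : ℂ) from funext fun y => by
      rw [bmp_apply, bmp_apply, ofReal_mul]]
    exact integral_ofReal
  set ψ : EE n → ℝ := fun y => φ₁ (t - y) * φ₂ y with hψ
  have hψc : Continuous ψ := (φ₁.continuous.comp (by fun_prop)).mul φ₂.continuous
  have hψ0 : ∀ y, 0 ≤ ψ y := fun y => mul_nonneg φ₁.nonneg φ₂.nonneg
  have hψsupp : support ψ = ((fun y => t - y) ⁻¹' ball c₁ R₁) ∩ ball c₂ R₂ := by
    ext y
    have e1 : support (fun x => (φ₁ : EE n → ℝ) x) = ball c₁ R₁ := φ₁.support_eq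
    have e2 : support (fun x => (φ₂ : EE n → ℝ) x) = ball c₂ R₂ := φ₂.support_eq
    simp only [mem_support, hψ, mul_ne_zero_iff, mem_inter_iff, mem_preimage]
    rw [← mem_support (f := fun x => (φ₁ : EE n → ℝ) x), ← mem_support (f := fun x => (φ₂ : EE n → ℝ) x), e1, e2]
  have hψs : HasCompactSupport ψ := by
    apply HasCompactSupport.intro (K := closedBall c₂ R₂) (isCompact_closedBall _ _)
    intro y hy
    have : y ∉ support ψ := by
      rw [hψsupp]
      intro hmem
      exact hy (ball_subset_closedBall hmem.2)
    simpa [mem_support, not_not] using this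
  have hψi : Integrable ψ := hψc.integrable_of_hasCompactSupport hψs
  simp only [mem_support, hval]
  constructor
  · intro h
    by_contra ht
    have hz : ∀ y, ψ y = 0 := by
      intro y
      by_contra hzy
      have hy : y ∈ support ψ := hzy
      rw [hψsupp] at hy
      obtain ⟨hy1, hy2⟩ := hy
      rw [mem_preimage, mem_ball_iff_norm] at hy1
      rw [mem_ball_iff_norm] at hy2
      apply ht
      rw [mem_ball_iff_norm]
      calc ‖t - (c₁ + c₂)‖ = ‖(t - y - c₁) + (y - c₂)‖ := by abel_nf
        _ ≤ ‖t - y - c₁‖ + ‖y - c₂‖ := norm_add_le _ _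
        _ < R₁ + R₂ := by linarith
    apply h
    have hint : (∫ y, ψ y) = 0 := by simp only [hz, integral_zero]
    rw [hint]
    simp
  · intro ht
    rw [mem_ball_iff_norm] at ht
    set d := t - (c₁ + c₂) with hd
    set s₀ : EE n := c₂ + (R₂ / (R₁ + R₂)) • d with hs₀
    have hmem : s₀ ∈ support ψ := by
      rw [hψsupp]
      constructor
      · rw [mem_preimage, mem_ball_iff_norm]
        have he : t - s₀ - c₁ = (R₁ / (R₁ + R₂)) • d := by
          have h1' : t - s₀ - c₁ = d - (R₂ / (R₁ + R₂)) • d := by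
            rw [hs₀, hd]; abel
          rw [h1', show d - (R₂ / (R₁ + R₂)) • d = (1 - R₂ / (R₁ + R₂)) • d from by
            rw [sub_smul, one_smul], show (1 : ℝ) - R₂ / (R₁ + R₂) = R₁ / (R₁ + R₂) from by
            field_simp; ring]
        rw [he, norm_smul, Real.norm_of_nonneg (div_nonneg (by linarith) (by linarith))]
        rcases eq_or_lt_of_le (norm_nonneg d) with hd0 | hd0
        · rw [← hd0]; simpa using h1.trans h2
        · calc R₁ / (R₁ + R₂) * ‖d‖ < R₁ / (R₁ + R₂) * (R₁ + R₂) := by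
                apply mul_lt_mul_of_pos_left ht (div_pos (by linarith) hS)
            _ = R₁ := by field_simp
      · rw [mem_ball_iff_norm]
        have he : s₀ - c₂ = (R₂ / (R₁ + R₂)) • d := by rw [hs₀]; abel
        rw [he, norm_smul, Real.norm_of_nonneg (div_nonneg (by linarith) (by linarith))]
        rcases eq_or_lt_of_le (norm_nonneg d) with hd0 | hd0
        · rw [← hd0]; simpa using h3.trans h4
        · calc R₂ / (R₁ + R₂) * ‖d‖ < R₂ / (R₁ + R₂) * (R₁ + R₂) := by
                apply mul_lt_mul_of_pos_left ht (div_pos (by linarith) hS)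
            _ = R₂ := by field_simp
    have hpos : 0 < ∫ y, ψ y := by
      rw [integral_pos_iff_support_of_nonneg hψ0 hψi]
      have hcont : Continuous (fun y : EE n => t - y) := continuous_const.sub continuous_id
      rw [hψsupp]
      apply ((isOpen_ball.preimage hcont).inter isOpen_ball).measure_pos volume
      rw [← hψsupp]
      exact ⟨s₀, hmem⟩
    simp only [ne_eq, ofReal_eq_zero]
    exact hpos.ne'

lemma conv_bmpe_support (x y : EE n) (ε : ℝ) (hε : 0 < ε) :
    support ⇑(convS (bmpe x ε hε) (bmpe y ε hε) (bmpe_cs x ε hε) (bmpe_cs y ε hε))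
      = ball (x + y) (ε + ε) := by
  exact conv_bmp_support x y (by linarith) (by linarith) (by linarith) (by linarith)

section VW

variable (V W : SS n → SS n)
  (hWV : ∀ f, W (V f) = f) (hVW : ∀ f, V (W f) = f)
  (hVmul : ∀ f g, V (mulS f g) = mulS (V f) (V g))
  (hV0 : V 0 = 0)

section basic
include hWV hV0

omit hV0 in
lemma V_inj {f g : SS n} (h : V f = V g) : f = g := by
  have := congrArg W h; rwa [hWV, hWV] at this

lemma V_zero_iff {f : SS n} : V f = 0 ↔ f = 0 := by
  constructor
  · intro h; exact V_inj V W hWV (h.trans hV0.symm)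

  · rintro rfl; exact hV0

end basic

/-- Characterization of support inclusion via multiplication. -/
lemma tsub_iff (f g : SS n) :
    tsupport ⇑f ⊆ tsupport ⇑g ↔ ∀ h : SS n, mulS h g = 0 → mulS h f = 0 := by
  constructor
  · intro hsub h hg0
    rw [mulS_eq_zero_iff] at hg0 ⊢
    intro x
    by_contra hx
    rcases mul_ne_zero_iff.1 hx with ⟨hhx, hfx⟩
    have hx1 : x ∈ tsupport ⇑g := hsub (subset_tsupport _ hfx)
    have hx2 : x ∈ closure (support ⇑g) := hx1
    rw [_root_.mem_closure_iff] at hx2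
    obtain ⟨y, hy1, hy2⟩ := hx2 (support ⇑h) (h.continuous.isOpen_support) hhx
    rcases mul_eq_zero.1 (hg0 y) with h' | h'
    · exact hy1 h'
    · exact hy2 h'
  · intro hP
    by_contra hsub
    rw [not_subset] at hsub
    obtain ⟨x, hxf, hxg⟩ := hsub
    obtain ⟨r, hr0, hrb⟩ : ∃ r > 0, ball x r ⊆ (tsupport ⇑g)ᶜ := by
      rcases Metric.mem_nhds_iff.1 ((isClosed_tsupport ⇑g).isOpen_compl.mem_nhds hxg)
        with ⟨r, hr0, hr⟩
      exact ⟨r, hr0, hr⟩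
    have hxcl : x ∈ closure (support ⇑f) := hxf
    rw [_root_.mem_closure_iff] at hxcl
    obtain ⟨y, hy1, hy2⟩ := hxcl (ball x (r/2)) isOpen_ball (mem_ball_self (by linarith))
    set h := bmp y (r/4) (r/3) (by linarith) (by linarith) with hh
    have hts : tsupport ⇑h ⊆ ball x r := by
      rw [bmp_tsupport]
      intro z hz
      rw [mem_closedBall] at hz
      rw [mem_ball] at hy1 ⊢
      calc dist z x ≤ dist z y + dist y x := dist_triangle _ _ _
        _ < r := by linarith
    have hzero : mulS h g = 0 := by
      rw [mulS_eq_zero_iff]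
      intro z
      by_cases hzs : h z = 0
      · rw [hzs, zero_mul]
      · have : z ∈ tsupport ⇑h := subset_tsupport _ hzs
        have : g z = 0 := by
          have hz' : z ∉ tsupport ⇑g := hrb (hts this)
          by_contra hgz
          exact hz' (subset_tsupport _ hgz)
        rw [this, mul_zero]
    have := hP h hzero
    rw [mulS_eq_zero_iff] at this
    have hy1' : h y = 1 := bmp_one _ _ _ _ _ (mem_closedBall_self (by linarith))
    have := this y
    rw [hy1', one_mul] at this
    exact hy2 this

section transfer
include hWV hVW hVmul

omit hWV hVmul in
lemma V_surj : Function.Surjective V := fun g => ⟨W g, hVW g⟩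

include hV0

lemma mulS_zero_transfer {f g : SS n} : mulS (V f) (V g) = 0 ↔ mulS f g = 0 := by
  rw [← hVmul]
  exact V_zero_iff V W hWV hV0

/-- Transfer of support inclusion along `V`. -/
lemma tsub_transfer {f g : SS n} :
    tsupport ⇑(V f) ⊆ tsupport ⇑(V g) ↔ tsupport ⇑f ⊆ tsupport ⇑g := by
  rw [tsub_iff, tsub_iff]
  constructor
  · intro hP h hz
    have := hP (V h) (by rw [mulS_zero_transfer V W hWV hVW hVmul hV0]; exact hz)
    rwa [mulS_zero_transfer V W hWV hVW hVmul hV0] at this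
  · intro hP h hz
    obtain ⟨h', rfl⟩ := V_surj V W hVW h
    rw [mulS_zero_transfer V W hWV hVW hVmul hV0] at hz ⊢
    exact hP h' hz

end transfer

end VW

section Core
variable {V W : SS n → SS n}

lemma bmp_ne_zero (c : EE n) (r R : ℝ) (hr : 0 < r) (hrR : r < R) : bmp c r R hr hrR ≠ 0 := by
  intro h
  have h1 := bmp_one c r R hr hrR (mem_closedBall_self hr.le)
  rw [h] at h1
  simp at h1

lemma V_bmp_ne_empty (hWV : ∀ f, W (V f) = f) (hV0 : V 0 = 0)
    (c : EE n) (r R : ℝ) (hr : 0 < r) (hrR : r < R) :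
    (tsupport ⇑(V (bmp c r R hr hrR))).Nonempty := by
  rw [nonempty_iff_ne_empty]
  intro h
  rw [tsupport_eq_empty_iff] at h
  have h0 : V (bmp c r R hr hrR) = 0 := SchwartzMap.ext fun x => by
    rw [show ⇑(V (bmp c r R hr hrR)) x = 0 from by rw [h]; rfl]; simp
  exact bmp_ne_zero c r R hr hrR ((V_zero_iff V W hWV hV0).1 h0)

lemma mul_eq_self_support (hVmul : ∀ f g, V (mulS f g) = mulS (V f) (V g))
    {u b : SS n} (hub : mulS u b = b) :
    ∀ z, V u z * V b z = V b z := by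
  intro z
  calc V u z * V b z = mulS (V u) (V b) z := (mulS_apply _ _ _).symm
    _ = V (mulS u b) z := by rw [hVmul]
    _ = V b z := by rw [hub]

lemma bmp_mul_absorb (c : EE n) {r R r' R' : ℝ} (hr : 0 < r) (hrR : r < R)
    (hr' : 0 < r') (hrR' : r' < R') (hRr' : R ≤ r') :
    mulS (bmp c r' R' hr' hrR') (bmp c r R hr hrR) = bmp c r R hr hrR := by
  apply SchwartzMap.ext; intro z
  rw [mulS_apply]
  by_cases hz : bmp c r R hr hrR z = 0
  · rw [hz, mul_zero]
  · have hzs : z ∈ ball c R := by rw [← bmp_support c r R hr hrR]; exact hz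
    have : z ∈ closedBall c r' := closedBall_subset_closedBall hRr' (ball_subset_closedBall hzs)
    rw [bmp_one c r' R' hr' hrR' this, one_mul]

lemma V_bmp_compact (hVmul : ∀ f g, V (mulS f g) = mulS (V f) (V g))
    (c : EE n) (r R : ℝ) (hr : 0 < r) (hrR : r < R) :
    HasCompactSupport ⇑(V (bmp c r R hr hrR)) := by
  have key := mul_eq_self_support hVmul
    (bmp_mul_absorb c hr hrR (hr.trans hrR) (lt_add_one R) le_rfl)
  have hto : Tendsto ⇑(V (bmp c R (R+1) (hr.trans hrR) (lt_add_one R)))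
      (cocompact (EE n)) (𝓝 0) := zero_at_infty _
  have hev : ∀ᶠ z in cocompact (EE n),
      ‖V (bmp c R (R+1) (hr.trans hrR) (lt_add_one R)) z‖ < 1 :=
    (NormedAddCommGroup.tendsto_nhds_zero.mp hto) 1 one_pos
  obtain ⟨K, hK, hKs⟩ := mem_cocompact.1 hev
  apply HasCompactSupport.intro hK
  intro z hz
  by_contra hbz
  have h1 : V (bmp c R (R+1) (hr.trans hrR) (lt_add_one R)) z = 1 :=
    mul_right_cancel₀ hbz (by rw [key z, one_mul])
  have h2 : ‖V (bmp c R (R+1) (hr.trans hrR) (lt_add_one R)) z‖ < 1 := hKs hz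
  rw [h1] at h2
  simp at h2

lemma V_int_sub (hWV : ∀ f, W (V f) = f) (hVW : ∀ f, V (W f) = f)
    (hVmul : ∀ f g, V (mulS f g) = mulS (V f) (V g)) (hV0 : V 0 = 0)
    (c : EE n) {r₁ R₁ r₂ R₂ : ℝ} (h1 : 0 < r₁) (h2 : r₁ < R₁) (h3 : 0 < r₂) (h4 : r₂ < R₂)
    (h5 : R₁ < R₂) :
    tsupport ⇑(V (bmp c r₁ R₁ h1 h2)) ⊆ interior (tsupport ⇑(V (bmp c r₂ R₂ h3 h4))) := by
  have hm0 : 0 < max R₁ r₂ := lt_max_of_lt_left (h1.trans h2)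
  have hmR : max R₁ r₂ < R₂ := max_lt h5 h4
  have key := mul_eq_self_support hVmul (bmp_mul_absorb c h1 h2 hm0 hmR (le_max_left _ _))
  have hsub : tsupport ⇑(V (bmp c (max R₁ r₂) R₂ hm0 hmR)) ⊆ tsupport ⇑(V (bmp c r₂ R₂ h3 h4)) := by
    rw [tsub_transfer V W hWV hVW hVmul hV0, bmp_tsupport, bmp_tsupport]
  intro z hz
  have hclosed : IsClosed {w : EE n | V (bmp c (max R₁ r₂) R₂ hm0 hmR) w = 1} :=
    isClosed_eq (V _).continuous continuous_const
  have hsupp1 : support ⇑(V (bmp c r₁ R₁ h1 h2)) ⊆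
      {w : EE n | V (bmp c (max R₁ r₂) R₂ hm0 hmR) w = 1} := by
    intro w hw
    exact mul_right_cancel₀ hw (by rw [key w, one_mul])
  have hz1 : V (bmp c (max R₁ r₂) R₂ hm0 hmR) z = 1 := closure_minimal hsupp1 hclosed hz
  refine mem_interior.2 ⟨support ⇑(V (bmp c (max R₁ r₂) R₂ hm0 hmR)), ?_, 
    (V _).continuous.isOpen_support, ?_⟩
  · exact (subset_tsupport _).trans hsub
  · rw [mem_support, hz1]; exact one_ne_zero

/-- image of the closed ball under the "support map" of V -/
def KK (V : SS n → SS n) (x : EE n) (ε : ℝ) (hε : 0 < ε) : Set (EE n) :=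
  tsupport ⇑(V (bmpe x ε hε))

lemma KK_closed (V : SS n → SS n) (x : EE n) (ε : ℝ) (hε : 0 < ε) : IsClosed (KK V x ε hε) :=
  isClosed_tsupport _

lemma KK_compact (hVmul : ∀ f g, V (mulS f g) = mulS (V f) (V g))
    (x : EE n) (ε : ℝ) (hε : 0 < ε) : IsCompact (KK V x ε hε) :=
  V_bmp_compact hVmul x (ε/2) ε (by linarith) (by linarith)

lemma KK_nonempty (hWV : ∀ f, W (V f) = f) (hV0 : V 0 = 0)
    (x : EE n) (ε : ℝ) (hε : 0 < ε) : (KK V x ε hε).Nonempty :=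
  V_bmp_ne_empty hWV hV0 x (ε/2) ε (by linarith) (by linarith)

lemma KK_mono (hWV : ∀ f, W (V f) = f) (hVW : ∀ f, V (W f) = f)
    (hVmul : ∀ f g, V (mulS f g) = mulS (V f) (V g)) (hV0 : V 0 = 0)
    {x x' : EE n} {ε ε' : ℝ} (hε : 0 < ε) (hε' : 0 < ε')
    (h : closedBall x ε ⊆ closedBall x' ε') : KK V x ε hε ⊆ KK V x' ε' hε' := by
  unfold KK bmpe
  rw [tsub_transfer V W hWV hVW hVmul hV0, bmp_tsupport, bmp_tsupport]
  exact h

lemma tau_exists (hWV : ∀ f, W (V f) = f) (hVW : ∀ f, V (W f) = f)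
    (hVmul : ∀ f g, V (mulS f g) = mulS (V f) (V g)) (hV0 : V 0 = 0) (x : EE n) :
    ∃ p, ∀ (ε : ℝ) (hε : 0 < ε), p ∈ KK V x ε hε := by
  have hpos : ∀ k : ℕ, (0:ℝ) < 1/(k+1) := fun k => by positivity
  set t : ℕ → Set (EE n) := fun k => KK V x (1/(k+1)) (hpos k) with ht
  have hsub : ∀ k, t (k+1) ⊆ t k := by
    intro k
    apply KK_mono hWV hVW hVmul hV0
    apply closedBall_subset_closedBall
    apply one_div_le_one_div_of_le (by positivity)
    push_cast; linarith
  have hne : ∀ k, (t k).Nonempty := fun k => KK_nonempty hWV hV0 x _ (hpos k)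
  have hcl : ∀ k, IsClosed (t k) := fun k => KK_closed V x _ (hpos k)
  obtain ⟨p, hp⟩ := IsCompact.nonempty_iInter_of_sequence_nonempty_isCompact_isClosed t hsub hne
    (KK_compact hVmul x _ (hpos 0)) hcl
  refine ⟨p, fun ε hε => ?_⟩
  obtain ⟨k, hk⟩ := exists_nat_one_div_lt hε
  have hpk : p ∈ t k := by
    have := mem_iInter.1 hp k; exact this
  exact KK_mono hWV hVW hVmul hV0 (hpos k) hε
    (closedBall_subset_closedBall (le_of_lt (by exact_mod_cast hk))) hpk

lemma V_int_sub' (hWV : ∀ f, W (V f) = f) (hVW : ∀ f, V (W f) = f)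
    (hVmul : ∀ f g, V (mulS f g) = mulS (V f) (V g)) (hV0 : V 0 = 0)
    (c : EE n) {ε₁ ε₂ : ℝ} (h1 : 0 < ε₁) (h2 : 0 < ε₂) (h12 : ε₁ < ε₂) :
    tsupport ⇑(V (bmpe c ε₁ h1)) ⊆ interior (tsupport ⇑(V (bmpe c ε₂ h2))) := by
  unfold bmpe
  exact V_int_sub hWV hVW hVmul hV0 c _ _ _ _ h12

lemma claim1 (hWV : ∀ f, W (V f) = f) (hVW : ∀ f, V (W f) = f)
    (hVmul : ∀ f g, V (mulS f g) = mulS (V f) (V g))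
    (hWmul : ∀ f g, W (mulS f g) = mulS (W f) (W g))
    (hV0 : V 0 = 0) (hW0 : W 0 = 0)
    (x p : EE n) (hp : ∀ (ε : ℝ) (hε : 0 < ε), p ∈ KK V x ε hε)
    (δ : ℝ) (hδ : 0 < δ) : x ∈ interior (KK W p δ hδ) := by
  have hδ4 : (0:ℝ) < δ/4 := by linarith
  have step1 : x ∈ tsupport ⇑(W (bmpe p (δ/4) hδ4)) := by
    by_contra hx
    obtain ⟨ε, hε0, hεb⟩ : ∃ ε > 0, ball x ε ⊆ (tsupport ⇑(W (bmpe p (δ/4) hδ4)))ᶜ := by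
      rcases Metric.mem_nhds_iff.1
        ((isClosed_tsupport ⇑(W (bmpe p (δ/4) hδ4))).isOpen_compl.mem_nhds hx)
        with ⟨ε, hε0, hε⟩
      exact ⟨ε, hε0, hε⟩
    have hε2 : (0:ℝ) < ε/2 := by linarith
    have ha : mulS (bmpe x (ε/2) hε2) (W (bmpe p (δ/4) hδ4)) = 0 := by
      rw [mulS_eq_zero_iff]
      intro z
      by_cases hz : bmpe x (ε/2) hε2 z = 0
      · rw [hz, zero_mul]
      · have hz1 : z ∈ closedBall x (ε/2) := by
          rw [← bmpe_tsupport x (ε/2) hε2]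
          exact subset_tsupport _ hz
        have hz2 : z ∈ ball x ε := by
          rw [mem_closedBall] at hz1; rw [mem_ball]; linarith
        have hzW : W (bmpe p (δ/4) hδ4) z = 0 := by
          by_contra hc
          exact hεb hz2 (subset_tsupport _ hc)
        rw [hzW, mul_zero]
    have hVa : mulS (V (bmpe x (ε/2) hε2)) (bmpe p (δ/4) hδ4) = 0 := by
      have h' := congrArg V ha
      rw [hVmul, hVW, hV0] at h'
      exact h'
    rw [mulS_eq_zero_iff] at hVa
    have hpK : p ∈ closure (support ⇑(V (bmpe x (ε/2) hε2))) := hp (ε/2) hε2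
    rw [_root_.mem_closure_iff] at hpK
    obtain ⟨z, hz1, hz2⟩ := hpK (ball p (δ/4)) isOpen_ball (mem_ball_self hδ4)
    have hb'z : bmpe p (δ/4) hδ4 z ≠ 0 := by
      rw [← mem_support, bmpe_support]
      exact hz1
    rcases mul_eq_zero.1 (hVa z) with h' | h'
    · exact hz2 h'
    · exact hb'z h'
  exact V_int_sub' hVW hWV hWmul hW0 p hδ4 hδ (by linarith) step1

lemma disj_int {F G : SS n} (h : ∀ z, F z * G z = 0) :
    interior (tsupport ⇑F) ∩ interior (tsupport ⇑G) = ∅ := by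
  by_contra hne
  obtain ⟨z, hzF, hzG⟩ := nonempty_iff_ne_empty.2 hne
  have h1 : (interior (tsupport ⇑F) ∩ interior (tsupport ⇑G)) ∩ support ⇑F |>.Nonempty := by
    have hzc : z ∈ closure (support ⇑F) := interior_subset hzF
    rw [_root_.mem_closure_iff] at hzc
    obtain ⟨y, hy1, hy2⟩ := hzc _ (isOpen_interior.inter isOpen_interior) ⟨hzF, hzG⟩
    exact ⟨y, hy1, hy2⟩
  obtain ⟨y, hy1, hy2⟩ := h1
  have hyc : y ∈ closure (support ⇑G) := interior_subset hy1.2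
  rw [_root_.mem_closure_iff] at hyc
  obtain ⟨w, hw1, hw2⟩ := hyc _ (F.continuous.isOpen_support) hy2
  rcases mul_eq_zero.1 (h w) with h' | h'
  · exact hw1 h'
  · exact hw2 h'

lemma tau_unique (hWV : ∀ f, W (V f) = f) (hVW : ∀ f, V (W f) = f)
    (hVmul : ∀ f g, V (mulS f g) = mulS (V f) (V g))
    (hWmul : ∀ f g, W (mulS f g) = mulS (W f) (W g))
    (hV0 : V 0 = 0) (hW0 : W 0 = 0)
    (x p q : EE n) (hp : ∀ (ε : ℝ) (hε : 0 < ε), p ∈ KK V x ε hε)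
    (hq : ∀ (ε : ℝ) (hε : 0 < ε), q ∈ KK V x ε hε) : p = q := by
  by_contra hpq
  have hδ : 0 < dist p q / 3 := by
    have := dist_pos.2 hpq; linarith
  set δ := dist p q / 3 with hδdef
  have hxp := claim1 hWV hVW hVmul hWmul hV0 hW0 x p hp δ hδ
  have hxq := claim1 hWV hVW hVmul hWmul hV0 hW0 x q hq δ hδ
  have hdisj : ∀ z, bmpe p δ hδ z * bmpe q δ hδ z = 0 := by
    intro z
    by_cases hz : bmpe p δ hδ z = 0
    · rw [hz, zero_mul]
    · have hz1 : z ∈ ball p δ := by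
        rw [← bmp_support p (δ/2) δ (by linarith) (by linarith)]; exact hz
      have hz2 : z ∉ ball q δ := by
        intro hc
        rw [mem_ball] at hz1 hc
        have h3 : dist p q ≤ dist z p + dist z q := by
          rw [dist_comm z p]; exact dist_triangle p z q
        rw [hδdef] at hz1 hc
        linarith
      have : bmpe q δ hδ z = 0 := by
        by_contra hc
        exact hz2 (by rw [← bmpe_support q δ hδ]; exact hc)
      rw [this, mul_zero]
  have hmul0 : mulS (bmpe p δ hδ) (bmpe q δ hδ) = 0 := (mulS_eq_zero_iff _ _).2 hdisj
  have hW' : ∀ z, W (bmpe p δ hδ) z * W (bmpe q δ hδ) z = 0 := by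
    have h' := congrArg W hmul0
    rw [hWmul, hW0] at h'
    rw [← mulS_eq_zero_iff]
    exact h'
  have := disj_int hW'
  rw [show KK W p δ hδ = tsupport ⇑(W (bmpe p δ hδ)) from rfl] at hxp
  rw [show KK W q δ hδ = tsupport ⇑(W (bmpe q δ hδ)) from rfl] at hxq
  rw [eq_empty_iff_forall_notMem] at this
  exact this x ⟨hxp, hxq⟩

section Tau
variable (V W : SS n → SS n)
  (hWV : ∀ f, W (V f) = f) (hVW : ∀ f, V (W f) = f)
  (hVmul : ∀ f g, V (mulS f g) = mulS (V f) (V g))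
  (hWmul : ∀ f g, W (mulS f g) = mulS (W f) (W g))
  (hV0 : V 0 = 0) (hW0 : W 0 = 0)

/-- The point map induced by `V`. -/
def tauF : EE n → EE n :=
  fun x => (tau_exists hWV hVW hVmul hV0 x).choose

lemma tauF_spec (x : EE n) (ε : ℝ) (hε : 0 < ε) :
    tauF V W hWV hVW hVmul hV0 x ∈ KK V x ε hε :=
  (tau_exists hWV hVW hVmul hV0 x).choose_spec ε hε

include hWmul hW0 in
lemma tauF_eq {x q : EE n} (hq : ∀ (ε : ℝ) (hε : 0 < ε), q ∈ KK V x ε hε) :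
    q = tauF V W hWV hVW hVmul hV0 x :=
  tau_unique hWV hVW hVmul hWmul hV0 hW0 x q _ hq (tauF_spec V W hWV hVW hVmul hV0 x)

include hWmul hW0 in
lemma tauF_inv (x : EE n) :
    tauF W V hVW hWV hWmul hW0 (tauF V W hWV hVW hVmul hV0 x) = x := by
  have hx : ∀ (δ : ℝ) (hδ : 0 < δ), x ∈ KK W (tauF V W hWV hVW hVmul hV0 x) δ hδ := by
    intro δ hδ
    exact interior_subset
      (claim1 hWV hVW hVmul hWmul hV0 hW0 x _ (tauF_spec V W hWV hVW hVmul hV0 x) δ hδ)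
  exact (tauF_eq W V hVW hWV hWmul hVmul hW0 hV0 hx).symm

include hWmul hW0 in
lemma tau_mem_tsupport (f : SS n) {x : EE n} (hx : x ∈ tsupport ⇑f) :
    tauF V W hWV hVW hVmul hV0 x ∈ tsupport ⇑(V f) := by
  set p := tauF V W hWV hVW hVmul hV0 x with hpdef
  by_contra hc
  obtain ⟨δ, hδ0, hδb⟩ : ∃ δ > 0, ball p δ ⊆ (tsupport ⇑(V f))ᶜ := by
    rcases Metric.mem_nhds_iff.1 ((isClosed_tsupport ⇑(V f)).isOpen_compl.mem_nhds hc)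
      with ⟨δ, hδ0, hδ⟩
    exact ⟨δ, hδ0, hδ⟩
  have hδ2 : (0:ℝ) < δ/2 := by linarith
  have ha : mulS (bmpe p (δ/2) hδ2) (V f) = 0 := by
    rw [mulS_eq_zero_iff]
    intro z
    by_cases hz : bmpe p (δ/2) hδ2 z = 0
    · rw [hz, zero_mul]
    · have hz1 : z ∈ closedBall p (δ/2) := by
        rw [← bmpe_tsupport p (δ/2) hδ2]
        exact subset_tsupport _ hz
      have hz2 : z ∈ ball p δ := by
        rw [mem_closedBall] at hz1; rw [mem_ball]; linarith
      have hzf : V f z = 0 := by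
        by_contra hcc
        exact hδb hz2 (subset_tsupport _ hcc)
      rw [hzf, mul_zero]
  have hWa : ∀ z, W (bmpe p (δ/2) hδ2) z * f z = 0 := by
    have h' := congrArg W ha
    rw [hWmul, hWV, hW0] at h'
    intro z
    calc W (bmpe p (δ/2) hδ2) z * f z = mulS (W (bmpe p (δ/2) hδ2)) f z := by rw [mulS_apply]
      _ = 0 := by rw [h']; rfl
  have hxint : x ∈ interior (tsupport ⇑(W (bmpe p (δ/2) hδ2))) :=
    claim1 hWV hVW hVmul hWmul hV0 hW0 x p (tauF_spec V W hWV hVW hVmul hV0 x) (δ/2) hδ2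
  have hxf : x ∈ closure (support ⇑f) := hx
  rw [_root_.mem_closure_iff] at hxf
  obtain ⟨y, hy1, hy2⟩ := hxf _ isOpen_interior hxint
  have hyc : y ∈ closure (support ⇑(W (bmpe p (δ/2) hδ2))) := interior_subset hy1
  rw [_root_.mem_closure_iff] at hyc
  obtain ⟨w, hw1, hw2⟩ := hyc _ (f.continuous.isOpen_support) hy2
  rcases mul_eq_zero.1 (hWa w) with h' | h'
  · exact hw2 h'
  · exact hw1 h'

include hWmul hW0 in
lemma tsupport_V_eq (f : SS n) :
    tsupport ⇑(V f) = tauF V W hWV hVW hVmul hV0 '' tsupport ⇑f := by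
  ext y
  constructor
  · intro hy
    have h1 : tauF W V hVW hWV hWmul hW0 y ∈ tsupport ⇑(W (V f)) :=
      tau_mem_tsupport W V hVW hWV hWmul hVmul hW0 hV0 (V f) hy
    rw [hWV] at h1
    exact ⟨tauF W V hVW hWV hWmul hW0 y, h1,
      tauF_inv W V hVW hWV hWmul hVmul hW0 hV0 y⟩
  · rintro ⟨x, hx, rfl⟩
    exact tau_mem_tsupport V W hWV hVW hVmul hWmul hV0 hW0 f hx

include hWmul hW0 in
lemma KK_shrink (x : EE n) (η : ℝ) (hη : 0 < η) :
    ∃ (ε : ℝ) (hε : 0 < ε), KK V x ε hε ⊆ ball (tauF V W hWV hVW hVmul hV0 x) η := by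
  set p := tauF V W hWV hVW hVmul hV0 x with hpdef
  by_contra hc
  push_neg at hc
  have hpos : ∀ k : ℕ, (0:ℝ) < 1/(k+1) := fun k => by positivity
  set t : ℕ → Set (EE n) := fun k => KK V x (1/(k+1)) (hpos k) \ ball p η with ht
  have hsub : ∀ k, t (k+1) ⊆ t k := by
    intro k
    apply diff_subset_diff_left
    apply KK_mono hWV hVW hVmul hV0
    apply closedBall_subset_closedBall
    apply one_div_le_one_div_of_le (by positivity)
    push_cast; linarith
  have hne : ∀ k, (t k).Nonempty := by
    intro k
    obtain ⟨z, hz1, hz2⟩ := not_subset.1 (hc (1/(k+1)) (hpos k))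
    exact ⟨z, hz1, hz2⟩
  have hcl : ∀ k, IsClosed (t k) := fun k =>
    (KK_closed V x _ (hpos k)).inter (isOpen_ball.isClosed_compl)
  have hcp : IsCompact (t 0) :=
    (KK_compact hVmul x _ (hpos 0)).diff isOpen_ball
  obtain ⟨q, hq⟩ := IsCompact.nonempty_iInter_of_sequence_nonempty_isCompact_isClosed
    t hsub hne hcp hcl
  have hqall : ∀ (ε : ℝ) (hε : 0 < ε), q ∈ KK V x ε hε := by
    intro ε hε
    obtain ⟨k, hk⟩ := exists_nat_one_div_lt hε
    have hqk : q ∈ t k := mem_iInter.1 hq k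
    exact KK_mono hWV hVW hVmul hV0 (hpos k) hε
      (closedBall_subset_closedBall (le_of_lt (by exact_mod_cast hk))) hqk.1
  have hqp : q = p := tauF_eq V W hWV hVW hVmul hWmul hV0 hW0 hqall
  have : q ∉ ball p η := (mem_iInter.1 hq 0).2
  rw [hqp] at this
  exact this (mem_ball_self hη)

include hWmul hW0 in
lemma tau_cont : Continuous (tauF V W hWV hVW hVmul hV0) := by
  rw [Metric.continuous_iff]
  intro x η hη
  obtain ⟨ε, hε, hsubb⟩ := KK_shrink V W hWV hVW hVmul hWmul hV0 hW0 x η hη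
  refine ⟨ε/2, by linarith, fun x' hx' => ?_⟩
  have h1 : tauF V W hWV hVW hVmul hV0 x' ∈ KK V x' (ε/2) (by linarith) :=
    tauF_spec V W hWV hVW hVmul hV0 x' (ε/2) (by linarith)
  have h2 : KK V x' (ε/2) (by linarith) ⊆ KK V x ε hε := by
    apply KK_mono hWV hVW hVmul hV0
    apply closedBall_subset_closedBall'
    linarith
  exact hsubb (h2 h1)

end Tau
end Core

end Stmt9Aux

open MeasureTheory SchwartzMap Complex

theorem stmt_9 (n : ℕ)
    (U : SchwartzMap (EuclideanSpace ℝ (Fin n)) ℂ → SchwartzMap (EuclideanSpace ℝ (Fin n)) ℂ)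
    (hUbij : Function.Bijective U)
    (h1 : ∀ f g h : SchwartzMap (EuclideanSpace ℝ (Fin n)) ℂ,
      (∀ x, h x = f x + starRingEnd ℂ (g x)) →
      ∀ x, U h x = U f x + starRingEnd ℂ (U g x))
    (h2 : ∀ f g h : SchwartzMap (EuclideanSpace ℝ (Fin n)) ℂ,
      (∀ x, h x = f x * g x) → ∀ x, U h x = U f x * U g x)
    (h3 : ∀ f g h : SchwartzMap (EuclideanSpace ℝ (Fin n)) ℂ,
      (∀ x, h x = ∫ y, f (x - y) * g y) →
      ∀ x, U h x = ∫ y, U f (x - y) * U g y) :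
    ∃ A : EuclideanSpace ℝ (Fin n) ≃ₗ[ℝ] EuclideanSpace ℝ (Fin n),
      ∀ f : SchwartzMap (EuclideanSpace ℝ (Fin n)) ℂ,
        ⇑A '' tsupport ⇑f = tsupport ⇑(U f) := by
  classical
  obtain ⟨W, hWV, hVW⟩ := Function.bijective_iff_has_inverse.mp hUbij
  have hU0 : U 0 = 0 := by
    have h00 := h1 0 0 0 (fun x => by simp)
    apply SchwartzMap.ext
    intro x
    have hx := h00 x
    have hc : starRingEnd ℂ (U 0 x) = 0 := (left_eq_add.mp hx)
    have : U 0 x = 0 := by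
      have := congrArg (starRingEnd ℂ) hc
      simpa using this
    simpa using this
  have hUmul : ∀ f g, U (mulS f g) = mulS (U f) (U g) := fun f g =>
    SchwartzMap.ext fun x => by
      rw [mulS_apply]
      exact h2 f g (mulS f g) (fun y => mulS_apply f g y) x
  have hWmul : ∀ f g, W (mulS f g) = mulS (W f) (W g) := by
    intro f g
    apply hUbij.1
    rw [hVW, hUmul, hVW, hVW]
  have hW0 : W 0 = 0 := by have h' := hWV 0; rwa [hU0] at h'
  set τ : EE n → EE n := tauF U W hWV hVW hUmul hU0 with hτdef
  have τspec := tauF_spec U W hWV hVW hUmul hU0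
  have hadd : ∀ x y, τ (x + y) = τ x + τ y := by
    intro x y
    apply eq_of_forall_dist_le
    intro η hη
    obtain ⟨εx, hεx, hx⟩ := KK_shrink U W hWV hVW hUmul hWmul hU0 hW0 x (η/2) (by linarith)
    obtain ⟨εy, hεy, hy⟩ := KK_shrink U W hWV hVW hUmul hWmul hU0 hW0 y (η/2) (by linarith)
    have hε0 : 0 < min εx εy := lt_min hεx hεy
    set ε := min εx εy with hεdef
    have hKx : KK U x ε hε0 ⊆ ball (τ x) (η/2) :=
      (KK_mono hWV hVW hUmul hU0 hε0 hεx
        (closedBall_subset_closedBall (min_le_left _ _))).trans hx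
    have hKy : KK U y ε hε0 ⊆ ball (τ y) (η/2) :=
      (KK_mono hWV hVW hUmul hU0 hε0 hεy
        (closedBall_subset_closedBall (min_le_right _ _))).trans hy
    set c := convS (bmpe x ε hε0) (bmpe y ε hε0) (bmpe_cs x ε hε0) (bmpe_cs y ε hε0) with hcdef
    have h2ε : 0 < ε + ε := by linarith
    have htc : tsupport ⇑c = closedBall (x+y) (ε+ε) := by
      rw [tsupport, hcdef, conv_bmpe_support, closure_ball _ (ne_of_gt h2ε)]
    have hKc : tsupport ⇑(U c) = KK U (x+y) (ε+ε) h2ε := by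
      have h1' : tsupport ⇑c = tsupport ⇑(bmpe (x+y) (ε+ε) h2ε) := by
        rw [htc, bmpe_tsupport]
      apply subset_antisymm
      · exact (tsub_transfer U W hWV hVW hUmul hU0).2 (by rw [h1'])
      · exact (tsub_transfer U W hWV hVW hUmul hU0).2 (by rw [h1'])
    have hUc : ∀ t, U c t = ∫ s, U (bmpe x ε hε0) (t - s) * U (bmpe y ε hε0) s :=
      h3 _ _ c (convS_apply _ _ _ _)
    have hconv : ⇑(U c)
        = ⇑(U (bmpe x ε hε0)) ⋆[ContinuousLinearMap.mul ℂ ℂ] ⇑(U (bmpe y ε hε0)) := by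
      funext t
      rw [hUc t, convolution_eq_swap]
      rfl
    have hsubb : tsupport ⇑(U c) ⊆ KK U x ε hε0 + KK U y ε hε0 := by
      have ha' : support ⇑(U c) ⊆ support ⇑(U (bmpe x ε hε0)) + support ⇑(U (bmpe y ε hε0)) := by
        rw [hconv]
        exact support_convolution_subset _
      have hb' : support ⇑(U (bmpe x ε hε0)) + support ⇑(U (bmpe y ε hε0))
          ⊆ KK U x ε hε0 + KK U y ε hε0 :=
        add_subset_add (subset_tsupport _) (subset_tsupport _)
      have hcl : IsClosed (KK U x ε hε0 + KK U y ε hε0) :=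
        ((KK_compact hUmul x ε hε0).add (KK_compact hUmul y ε hε0)).isClosed
      exact closure_minimal (ha'.trans hb') hcl
    have hτmem : τ (x+y) ∈ KK U x ε hε0 + KK U y ε hε0 :=
      hsubb (hKc ▸ τspec (x+y) (ε+ε) h2ε)
    rw [Set.mem_add] at hτmem
    obtain ⟨a, ha, b, hb, hab⟩ := hτmem
    have hd := dist_add_add_le_of_le (le_of_lt (hKx ha)) (le_of_lt (hKy hb))
    calc dist (τ (x+y)) (τ x + τ y) = dist (a + b) (τ x + τ y) := by rw [hab]
      _ ≤ η/2 + η/2 := hd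
      _ = η := by ring
  have hcont : Continuous τ := tau_cont U W hWV hVW hUmul hWmul hU0 hW0
  have hcont' : Continuous (tauF W U hVW hWV hWmul hW0) :=
    tau_cont W U hVW hWV hWmul hUmul hW0 hU0
  have hinv1 : ∀ x, tauF W U hVW hWV hWmul hW0 (τ x) = x :=
    tauF_inv U W hWV hVW hUmul hWmul hU0 hW0
  have hinv2 : ∀ x, τ (tauF W U hVW hWV hWmul hW0 x) = x :=
    tauF_inv W U hVW hWV hWmul hUmul hW0 hU0
  set e : EE n ≃+ EE n :=
    { toFun := τ
      invFun := tauF W U hVW hWV hWmul hW0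
      left_inv := hinv1
      right_inv := hinv2
      map_add' := hadd } with hedef
  refine ⟨(e.toRealLinearEquiv hcont hcont').toLinearEquiv, fun f => ?_⟩
  have him := tsupport_V_eq U W hWV hVW hUmul hWmul hU0 hW0 f
  rw [him]
  rfl
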